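/- Let N = 3, α ∈ [0,1], and σ₁, σ₂ ∈ ℝ. Let F₁ ∈ ℝ^{3×3} be strictly lower triangular and let F₂ ∈ ℝ^{3×3} have all entries zero except possibly the (2,1) entry (i.e., F₂ is of subdiagonal form with f_{2,3} = 0). Then xᵀBx ≥ (1−α)σ₂²‖x‖² for all x ∈ ℝ³, i.e., B − (1−α)σ₂²·I is positive semidefinite; moreover B·e₃ = (1−α)σ₂²·e₃, so the smallest eigenvalue of B equals exactly (1−α)σ₂². -/

import Mathlib

open Matrix

noncomputable section

/-- `B = α·Qs F₁ᵀF₁ Qs + (1−α)·Qs (I + F₂F₁)ᵀ(I + F₂F₁) Qs`. -/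
def Bmat {N : ℕ} (α : ℝ) (F₁ F₂ Qs : Matrix (Fin N) (Fin N) ℝ) :
    Matrix (Fin N) (Fin N) ℝ :=
  α • (Qs * F₁ᵀ * F₁ * Qs)
    + (1 - α) • (Qs * (1 + F₂ * F₁)ᵀ * (1 + F₂ * F₁) * Qs)

-- helper: quadratic form of AᵀA is a dot-square
lemma quad_form_eq (A : Matrix (Fin 3) (Fin 3) ℝ) (x : Fin 3 → ℝ) :
    x ⬝ᵥ (Aᵀ * A) *ᵥ x = (A *ᵥ x) ⬝ᵥ (A *ᵥ x) := by
  rw [← mulVec_mulVec, dotProduct_mulVec, vecMul_transpose]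

lemma dot_self_nonneg (v : Fin 3 → ℝ) : 0 ≤ v ⬝ᵥ v :=
  Finset.sum_nonneg fun _ _ => mul_self_nonneg _

/-- (Conjecture 1 for `N = 3`.) For strictly lower triangular
`F₁` and `F₂` nonzero at most in the `(2,1)` entry, `xᵀBx ≥ (1−α)σ₂²‖x‖²` for
all `x`, `B e₃ = (1−α)σ₂² e₃`, and the smallest eigenvalue of `B` equals
exactly `(1−α)σ₂²`. -/
theorem Bmat_min_eigenvalue_N3 (α : ℝ) (hα : α ∈ Set.Icc (0 : ℝ) 1) (σ₁ σ₂ : ℝ)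
    (F₁ F₂ : Matrix (Fin 3) (Fin 3) ℝ)
    (hF₁ : ∀ i j : Fin 3, i ≤ j → F₁ i j = 0)
    (hF₂ : ∀ i j : Fin 3, ¬(i = 1 ∧ j = 0) → F₂ i j = 0)
    (Qs : Matrix (Fin 3) (Fin 3) ℝ) (hQs : Qs.PosSemidef)
    (hQsq : Qs * Qs = σ₁ ^ 2 • (F₂ * F₂ᵀ) + σ₂ ^ 2 • (1 : Matrix (Fin 3) (Fin 3) ℝ)) :
    (∀ x : Fin 3 → ℝ,
      x ⬝ᵥ (Bmat α F₁ F₂ Qs).mulVec x ≥ (1 - α) * σ₂ ^ 2 * (x ⬝ᵥ x))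
    ∧ (Bmat α F₁ F₂ Qs).mulVec (Pi.single (2 : Fin 3) 1 : Fin 3 → ℝ)
        = ((1 - α) * σ₂ ^ 2) • (Pi.single (2 : Fin 3) 1 : Fin 3 → ℝ)
    ∧ ∀ hB : (Bmat α F₁ F₂ Qs).IsHermitian,
        (⨅ i : Fin 3, hB.eigenvalues i) = (1 - α) * σ₂ ^ 2 := by
  obtain ⟨hα0, hα1⟩ := hα
  have hQsym : Qsᵀ = Qs := hQs.1
  -- F₂ * F₁ = 0
  have hF21 : F₂ * F₁ = 0 := by
    ext i j
    rw [Matrix.mul_apply, Fin.sum_univ_three]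
    have h0 : F₁ 0 j = 0 := hF₁ 0 j (Fin.zero_le j)
    have h1 : F₂ i 1 = 0 := hF₂ i 1 (by simp)
    have h2 : F₂ i 2 = 0 := hF₂ i 2 (by simp)
    simp [h0, h1, h2]
  -- simplified form of B
  have hBeq : Bmat α F₁ F₂ Qs
      = α • ((F₁ * Qs)ᵀ * (F₁ * Qs))
        + (1 - α) • (σ₁ ^ 2 • (F₂ * F₂ᵀ) + σ₂ ^ 2 • (1 : Matrix (Fin 3) (Fin 3) ℝ)) := by
    rw [Bmat, hF21, ← hQsq]
    congr 1
    · rw [transpose_mul, hQsym]; simp [Matrix.mul_assoc]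
    · simp [Matrix.mul_assoc]
  -- Part 1
  have part1 : ∀ x : Fin 3 → ℝ,
      x ⬝ᵥ (Bmat α F₁ F₂ Qs).mulVec x ≥ (1 - α) * σ₂ ^ 2 * (x ⬝ᵥ x) := by
    intro x
    rw [hBeq]
    have e1 : x ⬝ᵥ ((F₁ * Qs)ᵀ * (F₁ * Qs)) *ᵥ x
        = ((F₁ * Qs) *ᵥ x) ⬝ᵥ ((F₁ * Qs) *ᵥ x) := quad_form_eq _ x
    have e2 : x ⬝ᵥ (F₂ * F₂ᵀ) *ᵥ x = (F₂ᵀ *ᵥ x) ⬝ᵥ (F₂ᵀ *ᵥ x) := by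
      have := quad_form_eq F₂ᵀ x
      rwa [transpose_transpose] at this
    have n1 := dot_self_nonneg ((F₁ * Qs) *ᵥ x)
    have n2 := dot_self_nonneg (F₂ᵀ *ᵥ x)
    have n3 := sq_nonneg σ₁
    rw [add_mulVec, dotProduct_add, smul_mulVec, smul_mulVec,
      dotProduct_smul, dotProduct_smul, add_mulVec, dotProduct_add,
      smul_mulVec, smul_mulVec, dotProduct_smul, dotProduct_smul,
      one_mulVec, e1, e2]
    simp only [smul_eq_mul]
    nlinarith [mul_nonneg hα0 n1, mul_nonneg (mul_nonneg (sub_nonneg.2 hα1) n3) n2]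
  refine ⟨part1, ?_⟩
  -- the standard basis vector e₂
  set e : Fin 3 → ℝ := (Pi.single (2 : Fin 3) 1) with he
  have hF2Te : F₂ᵀ *ᵥ e = 0 := by
    funext i
    simp only [mulVec, dotProduct, transpose_apply, he]
    rw [Fin.sum_univ_three]
    have h2 : F₂ 2 i = 0 := hF₂ 2 i (by simp)
    simp [h2, Pi.single_apply]
  have hF1e : F₁ *ᵥ e = 0 := by
    funext i
    simp only [mulVec, dotProduct, he]
    rw [Fin.sum_univ_three]
    have h2 : F₁ i 2 = 0 := hF₁ i 2 (by
      rw [Fin.le_def]; omega)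
    simp [h2, Pi.single_apply]
  have hQQe : (Qs * Qs) *ᵥ e = σ₂ ^ 2 • e := by
    rw [hQsq, add_mulVec, smul_mulVec, smul_mulVec, one_mulVec,
      ← mulVec_mulVec, hF2Te]
    simp
  -- Qs e = s • e
  obtain ⟨s, hs0, hs2, hQse⟩ : ∃ s : ℝ, 0 ≤ s ∧ s ^ 2 = σ₂ ^ 2 ∧ Qs *ᵥ e = s • e := by
    refine ⟨|σ₂|, abs_nonneg _, sq_abs _, ?_⟩
    set w : Fin 3 → ℝ := Qs *ᵥ e with hw
    have hQw : Qs *ᵥ w = σ₂ ^ 2 • e := by rw [hw, mulVec_mulVec, hQQe]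
    rcases eq_or_lt_of_le (abs_nonneg σ₂) with h0 | hpos
    · -- σ₂ = 0 : show w = 0
      have hσ : σ₂ ^ 2 = 0 := by
        have : |σ₂| = 0 := h0.symm
        nlinarith [sq_abs σ₂]
      have hww : w ⬝ᵥ w = 0 := by
        calc w ⬝ᵥ w = (e ᵥ* Qsᵀ) ⬝ᵥ w := by rw [vecMul_transpose]
        _ = (e ᵥ* Qs) ⬝ᵥ w := by rw [hQsym]
        _ = e ⬝ᵥ (Qs *ᵥ w) := by rw [← dotProduct_mulVec]
        _ = e ⬝ᵥ (σ₂ ^ 2 • e) := by rw [hQw]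
        _ = 0 := by rw [hσ]; simp
      have : w = 0 := by
        funext i
        have := Finset.sum_eq_zero_iff_of_nonneg
          (fun j (_ : j ∈ Finset.univ) => mul_self_nonneg (w j)) |>.mp hww i (Finset.mem_univ i)
        exact mul_self_eq_zero.mp this
      rw [← h0, this]; simp
    · -- |σ₂| > 0
      set s := |σ₂| with hsdef
      have hs2' : s ^ 2 = σ₂ ^ 2 := sq_abs σ₂
      set u : Fin 3 → ℝ := w - s • e with hu
      have hQu : Qs *ᵥ u = (-s) • u := by
        have h' : Qs *ᵥ u = σ₂ ^ 2 • e - s • w := by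
          rw [hu, Matrix.mulVec_sub, Matrix.mulVec_smul, hQw, ← hw]
        rw [h', hu, ← hs2']
        funext i
        simp only [Pi.sub_apply, Pi.smul_apply, Pi.neg_apply, smul_eq_mul, neg_smul]
        ring
      have hn : 0 ≤ u ⬝ᵥ Qs *ᵥ u := by
        have := hQs.dotProduct_mulVec_nonneg u
        simpa using this
      rw [hQu, dotProduct_smul] at hn
      have huu : u ⬝ᵥ u = 0 := by
        have h1 := dot_self_nonneg u
        have : s * (u ⬝ᵥ u) ≤ 0 := by
          simp only [smul_eq_mul] at hn
          nlinarith
        nlinarith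
      have hu0 : u = 0 := by
        funext i
        have := Finset.sum_eq_zero_iff_of_nonneg
          (fun j (_ : j ∈ Finset.univ) => mul_self_nonneg (u j)) |>.mp huu i (Finset.mem_univ i)
        exact mul_self_eq_zero.mp this
      have : w = s • e := by rwa [hu, sub_eq_zero] at hu0
      exact this
  -- part 2
  have part2 : (Bmat α F₁ F₂ Qs) *ᵥ e = ((1 - α) * σ₂ ^ 2) • e := by
    rw [hBeq, add_mulVec, smul_mulVec, smul_mulVec]
    have t1 : ((F₁ * Qs)ᵀ * (F₁ * Qs)) *ᵥ e = 0 := by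
      rw [← mulVec_mulVec, ← mulVec_mulVec (v := e) (M := F₁), hQse]
      rw [mulVec_smul, hF1e]
      simp
    have t2 : (σ₁ ^ 2 • (F₂ * F₂ᵀ) + σ₂ ^ 2 • (1 : Matrix (Fin 3) (Fin 3) ℝ)) *ᵥ e
        = σ₂ ^ 2 • e := by rw [← hQsq]; exact hQQe
    rw [t1, t2, smul_zero, zero_add, smul_smul]
  refine ⟨part2, ?_⟩
  -- part 3
  intro hB
  set c := (1 - α) * σ₂ ^ 2 with hc
  have lower : ∀ i : Fin 3, c ≤ hB.eigenvalues i := by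
    intro i
    let v : Fin 3 → ℝ := ⇑(hB.eigenvectorBasis i)
    have hmv : (Bmat α F₁ F₂ Qs) *ᵥ v = hB.eigenvalues i • v :=
      hB.mulVec_eigenvectorBasis i
    have hvp := part1 v
    rw [hmv, dotProduct_smul] at hvp
    have hnorm : v ⬝ᵥ v = 1 := by
      have h1 : ‖hB.eigenvectorBasis i‖ = 1 := hB.eigenvectorBasis.orthonormal.1 i
      have h2 : (inner ℝ (hB.eigenvectorBasis i) (hB.eigenvectorBasis i) : ℝ) = 1 := by
        rw [real_inner_self_eq_norm_sq, h1]; norm_num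
      rw [PiLp.inner_apply] at h2
      simpa [dotProduct, v, sq] using h2
    rw [hnorm] at hvp
    simp only [smul_eq_mul, mul_one] at hvp
    linarith
  have mem : c ∈ spectrum ℝ (Bmat α F₁ F₂ Qs) := by
    rw [spectrum.mem_iff]
    intro hunit
    rw [Matrix.isUnit_iff_isUnit_det] at hunit
    have hdet : (algebraMap ℝ (Matrix (Fin 3) (Fin 3) ℝ) c - Bmat α F₁ F₂ Qs).det = 0 := by
      rw [← Matrix.exists_mulVec_eq_zero_iff]
      refine ⟨e, ?_, ?_⟩
      · intro h
        have : e 2 = 0 := by rw [h]; rfl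
        simp [he] at this
      · rw [sub_mulVec, part2, Algebra.algebraMap_eq_smul_one, smul_mulVec, one_mulVec,
          sub_self]
    rw [hdet] at hunit
    exact (not_isUnit_zero : ¬ IsUnit (0:ℝ)) hunit
  have hrange : spectrum ℝ (Bmat α F₁ F₂ Qs) = Set.range hB.eigenvalues :=
    hB.spectrum_real_eq_range_eigenvalues
  rw [hrange] at mem
  obtain ⟨i₀, hi₀⟩ := mem
  apply le_antisymm
  · exact (ciInf_le (Set.Finite.bddBelow (Set.finite_range _)) i₀).trans_eq hi₀
  · exact le_ciInf lower


end
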